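/- The Al-Salam-Carlitz polynomial has the basic hypergeometric representation: U_n(x,y,a;q) = (-a)^n q^{\binom{n}{2}} \sum_{j=0}^n ((q^{-n};q)_j (y/x;q)_j)/((q;q)_j) \cdot (qx/a)^j, for a ≠ 0, x ≠ 0, q not a root of unity. -/

import Mathlib

open Finset

noncomputable def qPoch (q a : ℂ) (n : ℕ) : ℂ := ∏ j ∈ Finset.range n, (1 - a * q ^ j)

noncomputable def qPochInf (q a : ℂ) : ℂ := ∏' j : ℕ, (1 - a * q ^ j)

noncomputable def qBinom (q : ℂ) (n k : ℕ) : ℂ := qPoch q q n / (qPoch q q (n - k) * qPoch q q k)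

noncomputable def cauchyP (q x y : ℂ) (n : ℕ) : ℂ := ∏ j ∈ Finset.range n, (x - q ^ j * y)

noncomputable def ascU (q x y a : ℂ) (n : ℕ) : ℂ :=
  ∑ k ∈ Finset.range (n + 1), qBinom q n k * (-1) ^ k * q ^ Nat.choose k 2 * a ^ k * cauchyP q x y (n - k)


lemma qPoch_succ (q a : ℂ) (m : ℕ) : qPoch q a (m+1) = qPoch q a m * (1 - a * q ^ m) :=
  Finset.prod_range_succ _ _

lemma qPoch_q_ne_zero {q : ℂ} (hroot : ∀ m : ℕ, 0 < m → q ^ m ≠ 1) (n : ℕ) :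
    qPoch q q n ≠ 0 := by
  unfold qPoch
  refine Finset.prod_ne_zero_iff.mpr fun i _ => ?_
  intro h0
  apply hroot (i+1) (Nat.succ_pos i)
  have : q * q ^ i = 1 := by linear_combination -h0
  rw [pow_succ, mul_comm]
  exact this

lemma qPoch_split (q : ℂ) (n : ℕ) : ∀ j ≤ n,
    qPoch q q n = qPoch q q (n - j) * ∏ i ∈ range j, (1 - q ^ (n - i)) := by
  intro j
  induction j with
  | zero => simp
  | succ j ih =>
    intro hj
    have hj' : j ≤ n := by omega
    rw [prod_range_succ, ih hj']
    have h1 : n - j = (n - (j+1)) + 1 := by omega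
    rw [h1, qPoch_succ, pow_succ]
    ring

lemma qPoch_inv_pow (q : ℂ) (hq : q ≠ 0) (n : ℕ) : ∀ j ≤ n,
    qPoch q (q ^ (-(n:ℤ))) j * q ^ (n * j) =
      (-1) ^ j * q ^ (j.choose 2) * ∏ i ∈ range j, (1 - q ^ (n - i)) := by
  intro j
  induction j with
  | zero => simp [qPoch]
  | succ j ih =>
    intro hj
    have hj' : j ≤ n := by omega
    rw [qPoch_succ, prod_range_succ]
    have key : (1 - q ^ (-(n:ℤ)) * q ^ j) * q ^ n = -(q ^ j * (1 - q ^ (n - j))) := by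
      have h1 : q ^ (-(n:ℤ)) * q ^ n = 1 := by
        rw [← zpow_natCast q n, ← zpow_add₀ hq]; simp
      have h2 : q ^ j * q ^ (n - j) = q ^ n := by
        rw [← pow_add]; congr 1; omega
      calc (1 - q ^ (-(n:ℤ)) * q ^ j) * q ^ n
          = q ^ n - (q ^ (-(n:ℤ)) * q ^ n) * q ^ j := by ring
        _ = q ^ n - q ^ j := by rw [h1]; ring
        _ = -(q ^ j * (1 - q ^ (n - j))) := by rw [← h2]; ring
    have hmul : n * (j+1) = n * j + n := by ring
    rw [hmul, pow_add]
    have hch : (j+1).choose 2 = j.choose 2 + j := by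
      rw [Nat.choose_succ_succ, Nat.choose_one_right]; exact Nat.add_comm _ _
    calc qPoch q (q ^ (-(n:ℤ))) j * (1 - q ^ (-(n:ℤ)) * q ^ j) * (q ^ (n*j) * q ^ n)
        = (qPoch q (q ^ (-(n:ℤ))) j * q ^ (n*j)) * ((1 - q ^ (-(n:ℤ)) * q ^ j) * q ^ n) := by
          ring
      _ = ((-1)^j * q ^ (j.choose 2) * ∏ i ∈ range j, (1 - q ^ (n - i))) *
            (-(q ^ j * (1 - q ^ (n-j)))) := by rw [ih hj', key]
      _ = (-1)^(j+1) * q ^ ((j+1).choose 2) *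
            ((∏ i ∈ range j, (1 - q ^ (n - i))) * (1 - q ^ (n - j))) := by
          rw [hch, pow_add, pow_succ]; ring

lemma choose_two_add (m j : ℕ) : (m + j).choose 2 = m.choose 2 + j.choose 2 + m * j := by
  induction j with
  | zero => simp
  | succ j ih =>
    have h1 : (m + (j+1)) = (m + j) + 1 := by ring
    rw [h1, Nat.choose_succ_succ, Nat.choose_one_right, ih,
        Nat.choose_succ_succ, Nat.choose_one_right]
    ring

lemma sq_choose : ∀ j : ℕ, j ^ 2 = j.choose 2 * 2 + j := by
  intro j
  induction j with
  | zero => simp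
  | succ j ih =>
    have h : (j+1).choose 2 = j.choose 2 + j := by
      have := choose_two_add j 1; simpa using this
    have h2 : (j+1)^2 = j^2 + 2*j + 1 := by ring
    rw [h, h2, ih]; ring

lemma cauchyP_eq (q x y : ℂ) (hx : x ≠ 0) (j : ℕ) :
    cauchyP q x y j = x ^ j * qPoch q (y / x) j := by
  unfold cauchyP qPoch
  have hxp : x ^ j = ∏ _i ∈ range j, x := by simp
  rw [hxp, ← prod_mul_distrib]
  refine prod_congr rfl fun i _ => ?_
  field_simp

theorem stmt17 (q x y a : ℂ) (hq : q ≠ 0) (hroot : ∀ m : ℕ, 0 < m → q ^ m ≠ 1)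
    (hx : x ≠ 0) (ha : a ≠ 0) (n : ℕ) :
    ascU q x y a n =
      (-a) ^ n * q ^ Nat.choose n 2 *
        ∑ j ∈ Finset.range (n + 1), qPoch q (q ^ (-(n : ℤ))) j * qPoch q (y / x) j /
          qPoch q q j * (q * x / a) ^ j := by
  rw [ascU, ← Finset.sum_range_reflect, Finset.mul_sum]
  refine Finset.sum_congr rfl fun j hj => ?_
  have hjn : j ≤ n := by simp at hj; omega
  obtain ⟨k, rfl⟩ : ∃ k, n = k + j := ⟨n - j, by omega⟩
  have h1 : k + j - j = k := by omega
  have h2 : k + j + 1 - 1 - j = k := by omega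
  have h3 : k + j - k = j := by omega
  rw [h2, qBinom, h3, cauchyP_eq q x y hx, qPoch_split q (k+j) j (by omega)]
  have hE : qPoch q (q ^ (-((k+j : ℕ):ℤ))) j =
      ((-1) ^ j * q ^ (j.choose 2) * ∏ i ∈ range j, (1 - q ^ (k + j - i))) / q ^ ((k+j) * j) := by
    rw [eq_div_iff (pow_ne_zero _ hq), qPoch_inv_pow q hq (k+j) j (by omega)]
  rw [hE, h1, choose_two_add k j]
  have hB := qPoch_q_ne_zero hroot j
  have hC := qPoch_q_ne_zero hroot k
  have hadd : (k + j) * j = k * j + j * j := by ring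
  rw [hadd]
  field_simp
  ring_nf
  rw [sq_choose j, pow_add, Even.neg_one_pow (⟨j, by ring⟩ : Even (j*2))]
  rw [inv_pow]
  field_simp
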